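/- Rokhlin-type combinatorics for the cyclic shift on a finite cyclic group: For any m ∈ ℕ and ε > 0, there exists ℓ ∈ ℕ such that the cyclic shift σ on ℤ/(ℓm+1) admits two 'towers': there exist pairwise disjoint subsets P₁, …, P_m, Q₁, …, Q_{m+1} of ℤ/(ℓm+1) whose union is all of ℤ/(ℓm+1), such that the shift maps P_k to P_{k+1} (indices mod m) and Q_k to Q_{k+1} (indices mod m+1) up to symmetric differences of cardinality at most ε·(ℓm+1). -/
import Mathlib


open Finset

/-- Rokhlin-type combinatorics for the cyclic shift on `ℤ/(ℓm+1)`: two towers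
of heights `m` and `m+1` partitioning the cycle, approximately permuted by the
shift. -/
theorem cyclic_shift_rokhlin_towers (m : ℕ) (hm : 0 < m) (ε : ℝ) (hε : 0 < ε) :
    ∃ ℓ : ℕ, 0 < ℓ ∧
      ∃ (P : ZMod m → Finset (ZMod (ℓ * m + 1)))
        (Q : ZMod (m + 1) → Finset (ZMod (ℓ * m + 1))),
        (∀ k k', k ≠ k' → Disjoint (P k) (P k')) ∧
        (∀ k k', k ≠ k' → Disjoint (Q k) (Q k')) ∧
        (∀ k k', Disjoint (P k) (Q k')) ∧
        (∀ x : ZMod (ℓ * m + 1), (∃ k, x ∈ P k) ∨ (∃ k, x ∈ Q k)) ∧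
        (∀ k : ZMod m,
          ((symmDiff ((P k).image (· + 1)) (P (k + 1))).card : ℝ)
            ≤ ε * (ℓ * m + 1)) ∧
        (∀ k : ZMod (m + 1),
          ((symmDiff ((Q k).image (· + 1)) (Q (k + 1))).card : ℝ)
            ≤ ε * (ℓ * m + 1)) := by
  haveI : NeZero m := ⟨hm.ne'⟩
  obtain ⟨ℓ, hℓpos, hℓge⟩ : ∃ ℓ : ℕ, 0 < ℓ ∧ (2 : ℝ) / ε ≤ ℓ :=
    ⟨⌈2 / ε⌉₊ + 1, Nat.succ_pos _,
      (Nat.le_ceil _).trans (by exact_mod_cast Nat.le_succ _)⟩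
  refine ⟨ℓ, hℓpos, ?_⟩
  set N := ℓ * m + 1 with hNdef
  haveI : NeZero N := ⟨Nat.succ_ne_zero _⟩
  set a := (ℓ - 1) * m with hadef
  have hNa : N = a + m + 1 := by
    have h : (ℓ - 1) * m + m = ℓ * m := by
      cases ℓ with
      | zero => omega
      | succ n => simp [Nat.succ_sub_one, Nat.succ_mul]
    omega
  -- the bound `2 ≤ ε * N`
  have hbound : (2 : ℝ) ≤ ε * ((ℓ : ℝ) * m + 1) := by
    have h1 : (2 : ℝ) / ε ≤ (ℓ : ℝ) := hℓge
    have h2 : (ℓ : ℝ) ≤ (ℓ : ℝ) * m + 1 := by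
      have hm1 : (1 : ℝ) ≤ (m : ℝ) := by exact_mod_cast hm
      nlinarith [Nat.cast_nonneg (α := ℝ) ℓ]
    calc (2 : ℝ) = ε * (2 / ε) := by field_simp
    _ ≤ ε * ((ℓ : ℝ) * m + 1) := mul_le_mul_of_nonneg_left (h1.trans h2) hε.le
  -- the towers
  set P : ZMod m → Finset (ZMod N) :=
    fun k => univ.filter (fun x => x.val < a ∧ ((x.val : ℕ) : ZMod m) = k) with hP
  set Q : ZMod (m + 1) → Finset (ZMod N) :=
    fun k => univ.filter (fun x => a ≤ x.val ∧ ((x.val - a : ℕ) : ZMod (m + 1)) = k) with hQ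
  have hmemP : ∀ (k : ZMod m) (x : ZMod N),
      x ∈ P k ↔ x.val < a ∧ ((x.val : ℕ) : ZMod m) = k := by
    intro k x; simp [hP]
  have hmemQ : ∀ (k : ZMod (m + 1)) (x : ZMod N),
      x ∈ Q k ↔ a ≤ x.val ∧ ((x.val - a : ℕ) : ZMod (m + 1)) = k := by
    intro k x; simp [hQ]
  have hvalN : ∀ x : ZMod N, x.val < N := fun x => ZMod.val_lt x
  haveI : Fact (1 < N) := ⟨by
    have h : 1 ≤ ℓ * m := Nat.one_le_iff_ne_zero.mpr (Nat.mul_ne_zero hℓpos.ne' hm.ne')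
    omega⟩
  have hsucc : ∀ x : ZMod N, (x + 1).val = (x.val + 1) % N := by
    intro x
    rw [ZMod.val_add, ZMod.val_one]
  have hvinj : ∀ x y : ZMod N, x.val = y.val → x = y :=
    fun x y h => ZMod.val_injective N h
  have hvala : ((a : ZMod N)).val = a := ZMod.val_cast_of_lt (by omega)
  have hcast : ∀ n : ℕ, n < N → ((n : ZMod N)).val = n :=
    fun n hn => ZMod.val_cast_of_lt hn
  refine ⟨P, Q, ?_, ?_, ?_, ?_, ?_, ?_⟩
  · intro k k' hkk'
    rw [Finset.disjoint_left]
    intro x hx hx'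
    rw [hmemP] at hx hx'
    exact hkk' (hx.2 ▸ hx'.2 ▸ rfl)
  · intro k k' hkk'
    rw [Finset.disjoint_left]
    intro x hx hx'
    rw [hmemQ] at hx hx'
    exact hkk' (hx.2 ▸ hx'.2 ▸ rfl)
  · intro k k'
    rw [Finset.disjoint_left]
    intro x hx hx'
    rw [hmemP] at hx
    rw [hmemQ] at hx'
    omega
  · intro x
    by_cases hx : x.val < a
    · exact Or.inl ⟨((x.val : ℕ) : ZMod m), (hmemP _ _).mpr ⟨hx, rfl⟩⟩
    · exact Or.inr ⟨((x.val - a : ℕ) : ZMod (m + 1)),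
        (hmemQ _ _).mpr ⟨le_of_not_gt hx, rfl⟩⟩
  · -- P tower bound
    intro k
    have hsub : symmDiff ((P k).image (· + 1)) (P (k + 1)) ⊆ {(0 : ZMod N), (a : ZMod N)} := by
      intro y hy
      rw [Finset.mem_symmDiff] at hy
      rcases hy with ⟨hy1, hy2⟩ | ⟨hy1, hy2⟩
      · -- y = x+1 with x ∈ P k, y ∉ P (k+1)
        rw [Finset.mem_image] at hy1
        obtain ⟨x, hx, rfl⟩ := hy1
        rw [hmemP] at hx
        rw [hmemP] at hy2
        have hxv : (x + 1).val = x.val + 1 := by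
          rw [hsucc, Nat.mod_eq_of_lt (by omega)]
        have hcast1 : (((x + 1).val : ℕ) : ZMod m) = k + 1 := by
          rw [hxv]; push_cast [hx.2]; ring
        by_cases hlt : x.val + 1 < a
        · exact absurd ⟨by omega, hcast1⟩ hy2
        · have h : (x + 1).val = a := by omega
          simp only [Finset.mem_insert, Finset.mem_singleton]
          exact Or.inr (hvinj _ _ (h.trans hvala.symm))
      · -- y ∈ P (k+1), y not an image
        rw [hmemP] at hy1
        simp only [Finset.mem_insert, Finset.mem_singleton]
        left
        by_contra hy0
        have hyv : 0 < y.val := by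
          rcases Nat.eq_zero_or_pos y.val with h | h
          · exact absurd (hvinj y 0 (by simpa using h)) hy0
          · exact h
        set x : ZMod N := ((y.val - 1 : ℕ) : ZMod N) with hxdef
        have hxval : x.val = y.val - 1 := hcast _ (by have := hvalN y; omega)
        have hxy : x + 1 = y := by
          apply hvinj
          rw [hsucc, hxval, Nat.mod_eq_of_lt (by have := hvalN y; omega)]
          omega
        apply hy2
        rw [Finset.mem_image]
        refine ⟨x, ?_, hxy⟩
        rw [hmemP, hxval]
        refine ⟨by omega, ?_⟩
        have : ((y.val - 1 : ℕ) : ZMod m) = (y.val : ZMod m) - 1 := by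
          push_cast [Nat.cast_sub hyv]; ring
        rw [this, hy1.2]; ring
    calc ((symmDiff ((P k).image (· + 1)) (P (k + 1))).card : ℝ)
        ≤ (({(0 : ZMod N), (a : ZMod N)} : Finset (ZMod N)).card : ℝ) := by
          exact_mod_cast Finset.card_le_card hsub
      _ ≤ 2 := by exact_mod_cast Finset.card_insert_le _ _ |>.trans (by simp)
      _ ≤ ε * ((ℓ : ℝ) * m + 1) := hbound
  · -- Q tower bound
    intro k
    have hsub : symmDiff ((Q k).image (· + 1)) (Q (k + 1)) ⊆ {(0 : ZMod N), (a : ZMod N)} := by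
      intro y hy
      rw [Finset.mem_symmDiff] at hy
      rcases hy with ⟨hy1, hy2⟩ | ⟨hy1, hy2⟩
      · rw [Finset.mem_image] at hy1
        obtain ⟨x, hx, rfl⟩ := hy1
        rw [hmemQ] at hx
        rw [hmemQ] at hy2
        have hxN := hvalN x
        by_cases hlt : x.val + 1 < N
        · exfalso
          apply hy2
          have hxv : (x + 1).val = x.val + 1 := by
            rw [hsucc, Nat.mod_eq_of_lt hlt]
          refine ⟨by omega, ?_⟩
          have h1 : (x + 1).val - a = (x.val - a) + 1 := by omega
          rw [hxv] at h1 ⊢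
          rw [h1]; push_cast [hx.2]; ring
        · -- x.val = N - 1, x + 1 = 0
          have h0 : (x + 1).val = 0 := by
            have : x.val + 1 = N := by omega
            rw [hsucc, this, Nat.mod_self]
          simp only [Finset.mem_insert, Finset.mem_singleton]
          exact Or.inl (hvinj _ _ (by simpa using h0))
      · rw [hmemQ] at hy1
        simp only [Finset.mem_insert, Finset.mem_singleton]
        by_cases hya : y.val = a
        · exact Or.inr (hvinj _ _ (hya.trans hvala.symm))
        · exfalso
          have hyv : a < y.val := lt_of_le_of_ne hy1.1 (Ne.symm hya)
          apply hy2
          rw [Finset.mem_image]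
          set x : ZMod N := ((y.val - 1 : ℕ) : ZMod N) with hxdef
          have hxval : x.val = y.val - 1 := hcast _ (by have := hvalN y; omega)
          have hxy : x + 1 = y := by
            apply hvinj
            rw [hsucc, hxval, Nat.mod_eq_of_lt (by have := hvalN y; omega)]
            omega
          refine ⟨x, ?_, hxy⟩
          rw [hmemQ, hxval]
          refine ⟨by omega, ?_⟩
          have h1 : (y.val - 1) - a = (y.val - a) - 1 := by omega
          have h2 : 1 ≤ y.val - a := by omega
          rw [h1]
          have : (((y.val - a) - 1 : ℕ) : ZMod (m + 1)) = ((y.val - a : ℕ) : ZMod (m + 1)) - 1 := by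
            push_cast [Nat.cast_sub h2]; ring
          rw [this, hy1.2]; ring
    calc ((symmDiff ((Q k).image (· + 1)) (Q (k + 1))).card : ℝ)
        ≤ (({(0 : ZMod N), (a : ZMod N)} : Finset (ZMod N)).card : ℝ) := by
          exact_mod_cast Finset.card_le_card hsub
      _ ≤ 2 := by exact_mod_cast Finset.card_insert_le _ _ |>.trans (by simp)
      _ ≤ ε * ((ℓ : ℝ) * m + 1) := hbound
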